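/- Let Ω be a d-dimensional cycle with d-faces F_1, ..., F_k inside a simplicial complex Γ, and suppose A_1, ..., A_ℓ are (d+1)-faces of the induced subcomplex of Γ on V(Ω) such that, over Z/2Z, ∂_{d+1}(A_1 + ... + A_ℓ) = F_1 + ... + F_k, and no proper subset of {A_1,...,A_ℓ} satisfies this equation. Then for any vertex v not in V(Ω), the simplicial complex with facets F_1 ∪ {v}, ..., F_k ∪ {v}, A_1, ..., A_ℓ is a (d+1)-dimensional cycle. -/

import Mathlib

namespace ConnonFaridi

open Finset
open scoped Classical

noncomputable section

variable {V : Type*} [Fintype V] [DecidableEq V]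

/-- An abstract simplicial complex on vertex type `V`: a family of faces closed under subsets. -/
def IsComplex (K : Finset (Finset V)) : Prop :=
  ∀ F ∈ K, ∀ F' ⊆ F, F' ∈ K

/-- The vertex set of a complex. -/
def verts (K : Finset (Finset V)) : Finset V := K.sup id

/-- `K` is pure of dimension `n`: every face is contained in a face of dimension `n`. -/
def IsPureDim (n : ℕ) (K : Finset (Finset V)) : Prop :=
  ∀ F ∈ K, ∃ G ∈ K, F ⊆ G ∧ G.card = n + 1

/-- The pure d-skeleton: the complex generated by (downward closure of) the d-faces of `K`. -/
def skeleton (d : ℕ) (K : Finset (Finset V)) : Finset (Finset V) :=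
  (K.filter fun G => G.card = d + 1).biUnion Finset.powerset

/-- The d-closure of a (pure d-dimensional) complex `K`, relative to the vertex set `W`:
faces are all subsets of `W` of size at most `d`, together with those subsets all of whose
(d+1)-element subsets are faces of `K`. -/
def closureOn (W : Finset V) (d : ℕ) (K : Finset (Finset V)) : Finset (Finset V) :=
  W.powerset.filter fun S => S.card ≤ d ∨ ∀ T ⊆ S, T.card = d + 1 → T ∈ K

/-- The d-closure `Δ_d(K)` on the vertex set of `K`. -/
def closure (d : ℕ) (K : Finset (Finset V)) : Finset (Finset V) :=
  closureOn (verts K) d K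

/-- The induced subcomplex of `K` on the vertex set `W`. -/
def induced (K : Finset (Finset V)) (W : Finset V) : Finset (Finset V) :=
  K.filter fun F => F ⊆ W

/-- The Z/2 simplicial boundary of a chain, encoded as the finset of faces with coefficient 1:
the boundary consists of those sets which are codimension-one subsets of an odd number of
members of the chain. (For a chain of vertices this is the reduced/augmented boundary.) -/
def bdry (c : Finset (Finset V)) : Finset (Finset V) :=
  (c.biUnion Finset.powerset).filter fun T =>
    Odd ((c.filter fun F => T ⊆ F ∧ T.card + 1 = F.card).card)

/-- Two d-faces of the family `c` are adjacent if they intersect in a (d-1)-face. -/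
def adjOn (d : ℕ) (c : Finset (Finset V)) (A B : Finset V) : Prop :=
  A ∈ c ∧ B ∈ c ∧ (A ∩ B).card = d

/-- A d-dimensional cycle, recorded by its set `Ω` of d-faces: a nonempty pure d-dimensional,
d-path-connected complex in which every (d-1)-face lies in an even number of d-faces. -/
def IsCycleFaces (d : ℕ) (Ω : Finset (Finset V)) : Prop :=
  Ω.Nonempty ∧ (∀ F ∈ Ω, F.card = d + 1) ∧
    (∀ F ∈ Ω, ∀ G ∈ Ω, Relation.ReflTransGen (adjOn d Ω) F G) ∧
    ∀ T : Finset V, T.card = d → Even ((Ω.filter fun F => T ⊆ F).card)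

/-- A d-dimensional cycle is face-minimal if no proper subset of its d-faces is a
d-dimensional cycle. -/
def FaceMinimal (d : ℕ) (Ω : Finset (Finset V)) : Prop :=
  ∀ Ω' ⊂ Ω, ¬ IsCycleFaces d Ω'

/-- The complex generated by `Ω` is j-complete: it contains all j-faces on its vertex set. -/
def CompleteOn (j : ℕ) (Ω : Finset (Finset V)) : Prop :=
  ∀ S ⊆ verts Ω, S.card = j + 1 → ∃ F ∈ Ω, S ⊆ F

/-- `C` is a chord set of the d-dimensional cycle `Ω` in the complex `Γ` (Connon–Faridi). -/
def IsChordSet (d : ℕ) (Γ Ω C : Finset (Finset V)) : Prop :=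
  (∀ F ∈ C, F ∈ Γ ∧ F.card = d + 1 ∧ F ∉ Ω) ∧
  ∃ L : List (Finset (Finset V)), 2 ≤ L.length ∧
    (∀ Ωi ∈ L, IsCycleFaces d Ωi ∧ (∀ F ∈ Ωi, F ∈ C ∪ Ω) ∧ (verts Ωi).card < (verts Ω).card) ∧
    (∀ F ∈ C ∪ Ω, ∃ Ωi ∈ L, F ∈ Ωi) ∧
    (∀ F ∈ C, Even (L.countP fun Ωi => decide (F ∈ Ωi))) ∧
    (∀ F ∈ Ω, Odd (L.countP fun Ωi => decide (F ∈ Ωi)))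

/-- `Γ` is d-chorded: it is pure of dimension `d ≥ 1` and every face-minimal, non-d-complete
d-dimensional cycle in `Γ` has a chord set in `Γ`. -/
def IsChorded (d : ℕ) (Γ : Finset (Finset V)) : Prop :=
  1 ≤ d ∧ IsPureDim d Γ ∧
    ∀ Ω ⊆ Γ, IsCycleFaces d Ω → FaceMinimal d Ω → ¬ CompleteOn d Ω →
      ∃ C, IsChordSet d Γ Ω C

/-- The reduced simplicial homology of `K` over Z/2 vanishes in dimension `i`:
every homological i-cycle is an i-boundary. -/
def HVanishes (K : Finset (Finset V)) (i : ℕ) : Prop :=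
  ∀ c : Finset (Finset V), (∀ F ∈ c, F ∈ K ∧ F.card = i + 1) → bdry c = ∅ →
    ∃ c' : Finset (Finset V), (∀ F ∈ c', F ∈ K ∧ F.card = i + 2) ∧ bdry c' = c

/-- The Stanley–Reisner complex of the square-free monomial ideal generated by the
sets (monomials) in `𝒢`: faces are the sets containing no generator. -/
def stanleyReisner (𝒢 : Finset (Finset V)) : Finset (Finset V) :=
  Finset.univ.powerset.filter fun S => ∀ G ∈ 𝒢, ¬ G ⊆ S

/-- The facet complex of the square-free monomial ideal generated by `𝒢`. -/
def facetCx (𝒢 : Finset (Finset V)) : Finset (Finset V) :=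
  Finset.univ.powerset.filter fun S => ∃ G ∈ 𝒢, S ⊆ G

/-- The d-complement of `K`: the complex whose facets are the (d+1)-element sets
that are not faces of `K`. -/
def dComplement (d : ℕ) (K : Finset (Finset V)) : Finset (Finset V) :=
  Finset.univ.powerset.filter fun S => ∃ T, S ⊆ T ∧ T.card = d + 1 ∧ T ∉ K

/-- The ideal generated by the square-free degree-(d+1) monomials `𝒢` has a (d+1)-linear
resolution over a field of characteristic 2.  (Formalized via Fröberg's criterion, which over a
field of characteristic 2 amounts to the vanishing of the reduced Z/2 homology of all induced
subcomplexes of the Stanley–Reisner complex in every dimension `i ≠ (d+1) - 2`.) -/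
def HasLinRes (d : ℕ) (𝒢 : Finset (Finset V)) : Prop :=
  ∀ (W : Finset V) (i : ℕ), i ≠ d - 1 → HVanishes (induced (stanleyReisner 𝒢) W) i

/-- A graph is chordal if every cycle of length at least 4 has a chord. -/
def IsChordalGraph (G : SimpleGraph V) : Prop :=
  ∀ (v : V) (p : G.Walk v v), p.IsCycle → 4 ≤ p.length →
    ∃ u w, u ∈ p.support ∧ w ∈ p.support ∧ G.Adj u w ∧ s(u, w) ∉ p.edges

/-- The clique complex of a graph. -/
def cliqueCx (G : SimpleGraph V) : Finset (Finset V) :=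
  Finset.univ.powerset.filter fun S => G.IsClique (S : Set V)

/-- A graph viewed as a pure 1-dimensional simplicial complex (faces: subsets of edges). -/
def graphCx (G : SimpleGraph V) : Finset (Finset V) :=
  Finset.univ.powerset.filter fun S => ∃ u v, G.Adj u v ∧ S ⊆ ({u, v} : Finset V)

/-- The generating set of the edge ideal of a graph: its edges as 2-element sets. -/
def edgeGens (G : SimpleGraph V) : Finset (Finset V) :=
  Finset.univ.powerset.filter fun S => ∃ u v, G.Adj u v ∧ S = {u, v}

lemma bdry_mem_iff (c : Finset (Finset V)) (T : Finset V) :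
    T ∈ bdry c ↔ Odd ((c.filter fun F => T ⊆ F ∧ T.card + 1 = F.card).card) := by
  unfold bdry
  simp only [mem_filter, mem_biUnion, mem_powerset]
  constructor
  · exact fun h => h.2
  · intro h
    refine ⟨?_, h⟩
    have hpos : 0 < (c.filter fun F => T ⊆ F ∧ T.card + 1 = F.card).card := h.pos
    obtain ⟨F, hF⟩ := Finset.card_pos.1 hpos
    rw [mem_filter] at hF
    exact ⟨F, hF.1, hF.2.1⟩

/-- If Ω is a d-dimensional cycle in Γ and A₁,...,A_ℓ are (d+1)-faces of the
induced subcomplex of Γ on V(Ω) with ∂(A₁+...+A_ℓ) equal to the sum of the d-faces of Ω over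
Z/2, minimally so, then for v ∉ V(Ω) the complex with facets F₁ ∪ {v},...,F_k ∪ {v},
A₁,...,A_ℓ is a (d+1)-dimensional cycle. -/
theorem stmt6 (d : ℕ) (hd : 1 ≤ d) (Γ Ω A : Finset (Finset V)) (hΓ : IsComplex Γ)
    (hΩΓ : Ω ⊆ Γ) (hΩ : IsCycleFaces d Ω)
    (hA : ∀ B ∈ A, B ∈ induced Γ (verts Ω) ∧ B.card = d + 2)
    (hbd : bdry A = Ω) (hmin : ∀ A' ⊂ A, bdry A' ≠ Ω)
    (v : V) (hv : v ∉ verts Ω) :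
    IsCycleFaces (d + 1) ((Ω.image fun F => insert v F) ∪ A) := by
  obtain ⟨hne, hcard, hconn, heven⟩ := hΩ
  set U : Finset (Finset V) := (Ω.image fun F => insert v F) ∪ A with hUdef
  -- basic facts
  have hvF : ∀ F ∈ Ω, v ∉ F := by
    intro F hF hvmem
    exact hv (Finset.le_sup (f := id) hF hvmem)
  have hAfact : ∀ B ∈ A, v ∉ B ∧ B.card = d + 2 := by
    intro B hB
    obtain ⟨hBi, hBc⟩ := hA B hB
    rw [induced, mem_filter] at hBi
    exact ⟨fun hvmem => hv (hBi.2 hvmem), hBc⟩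
  have hconecard : ∀ F ∈ Ω, (insert v F).card = d + 2 := by
    intro F hF
    rw [card_insert_of_notMem (hvF F hF), hcard F hF]
  have hcardU : ∀ X ∈ U, X.card = d + 2 := by
    intro X hX
    rcases mem_union.1 hX with hX | hX
    · obtain ⟨F, hF, rfl⟩ := mem_image.1 hX
      exact hconecard F hF
    · exact (hAfact X hX).2
  have hvU : ∀ F ∈ Ω, insert v F ∈ U := fun F hF =>
    mem_union_left _ (mem_image_of_mem _ hF)
  have hdisj : Disjoint (Ω.image fun F => insert v F) A := by
    rw [Finset.disjoint_left]
    rintro X hX hXA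
    obtain ⟨F, hF, rfl⟩ := mem_image.1 hX
    exact (hAfact _ hXA).1 (mem_insert_self v F)
  have hinj : Set.InjOn (fun F => insert v F) (↑Ω : Set (Finset V)) := by
    intro F hF G hG h
    rw [Finset.mem_coe] at hF hG
    have h1 := congrArg (fun s : Finset V => s.erase v) h
    simpa [erase_insert (hvF F hF), erase_insert (hvF G hG)] using h1
  -- parity of A-incidence
  have hparA : ∀ T : Finset V, T.card = d + 1 →
      (T ∈ Ω ↔ Odd ((A.filter fun B => T ⊆ B).card)) := by
    intro T hT
    rw [← hbd, bdry_mem_iff]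
    have hfe : (A.filter fun F => T ⊆ F ∧ T.card + 1 = F.card) =
        (A.filter fun F => T ⊆ F) := by
      apply filter_congr
      intro B hB
      simp [hT, (hAfact B hB).2]
    rw [hfe]
  -- symmetry of adjacency
  have hsymm : Symmetric (adjOn (d + 1) U) := by
    rintro a b ⟨ha, hb, h⟩
    exact ⟨hb, ha, by rwa [inter_comm]⟩
  -- adjacency helper
  have hadj : ∀ B ∈ A, ∀ X ∈ U, X ≠ B → ∀ T : Finset V, T.card = d + 1 →
      T ⊆ B → T ⊆ X → adjOn (d + 1) U X B := by
    intro B hB X hX hne' T hT hTB hTX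
    refine ⟨hX, mem_union_right _ hB, ?_⟩
    have h1 : T ⊆ X ∩ B := subset_inter hTX hTB
    have h2 : d + 1 ≤ (X ∩ B).card := hT ▸ card_le_card h1
    have h3 : (X ∩ B).card ≤ d + 2 := (hAfact B hB).2 ▸ card_le_card inter_subset_right
    rcases Nat.lt_or_ge (X ∩ B).card (d + 2) with h4 | h4
    · omega
    · exfalso
      have hBc := (hAfact B hB).2
      have h5 : X ∩ B = B :=
        Finset.eq_of_subset_of_card_le inter_subset_right (by omega)
      have h6 : B ⊆ X := h5 ▸ inter_subset_left
      exact hne' (Finset.eq_of_subset_of_card_le h6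
        (by rw [hcardU X hX, (hAfact B hB).2])).symm
  -- cone faces are mutually connected
  have cone_conn : ∀ F ∈ Ω, ∀ G ∈ Ω,
      Relation.ReflTransGen (adjOn (d + 1) U) (insert v F) (insert v G) := by
    intro F hF G hG
    have h := hconn F hF G hG
    clear hG
    induction h with
    | refl => exact .refl
    | tail _ h2 ih =>
        rename_i b c _
        obtain ⟨hb, hc, hbc⟩ := h2
        refine .tail ih ⟨hvU b hb, hvU c hc, ?_⟩
        rw [← insert_inter_distrib, card_insert_of_notMem
          (fun hm => hvF b hb (mem_inter.1 hm).1), hbc]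
  -- every A-face is connected to the cone
  set P : Finset V → Prop :=
    fun B => ∃ F ∈ Ω, Relation.ReflTransGen (adjOn (d + 1) U) (insert v F) B with hPdef
  have hallP : ∀ B ∈ A, P B := by
    by_contra hcon
    push_neg at hcon
    obtain ⟨B₀, hB₀A, hB₀⟩ := hcon
    set A' := A.filter P with hA'def
    set A'' := A.filter fun B => ¬ P B with hA''def
    have hsplitc : ∀ T : Finset V, (A.filter fun B => T ⊆ B).card =
        (A'.filter fun B => T ⊆ B).card + (A''.filter fun B => T ⊆ B).card := by
      intro T
      rw [← card_union_of_disjoint (Finset.disjoint_filter_filter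
        (Finset.disjoint_filter_filter_not A A P)), ← filter_union,
        filter_union_filter_not_eq]
    have hA''even : ∀ T : Finset V, T.card = d + 1 →
        Even ((A''.filter fun B => T ⊆ B).card) := by
      intro T hT
      by_contra hodd
      rw [Nat.not_even_iff_odd] at hodd
      obtain ⟨B'', hB''⟩ := Finset.card_pos.1 hodd.pos
      rw [hA''def, filter_filter, mem_filter] at hB''
      obtain ⟨hB''A, hB''nP, hTB''⟩ := hB''
      by_cases hTΩ : T ∈ Ω
      · apply hB''nP
        refine ⟨T, hTΩ, Relation.ReflTransGen.single
          (hadj B'' hB''A (insert v T) (hvU T hTΩ) ?_ T hT hTB'' (subset_insert v T))⟩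
        intro heq
        exact (hAfact B'' hB''A).1 (heq ▸ mem_insert_self v T)
      · have hAe : Even ((A.filter fun B => T ⊆ B).card) := by
          rw [← Nat.not_odd_iff_even]
          exact fun h => hTΩ ((hparA T hT).2 h)
        have hA'odd : Odd ((A'.filter fun B => T ⊆ B).card) := by
          have := hsplitc T
          rcases Nat.even_or_odd ((A'.filter fun B => T ⊆ B).card) with he | ho
          · exfalso
            rw [← Nat.not_odd_iff_even] at hAe
            exact hAe (by rw [this]; exact he.add_odd hodd)
          · exact ho
        obtain ⟨B', hB'⟩ := Finset.card_pos.1 hA'odd.pos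
        rw [hA'def, filter_filter, mem_filter] at hB'
        obtain ⟨hB'A, hB'P, hTB'⟩ := hB'
        apply hB''nP
        obtain ⟨F, hF, hpath⟩ := hB'P
        have hne2 : B' ≠ B'' := fun h => hB''nP (h ▸ ⟨F, hF, hpath⟩)
        exact ⟨F, hF, hpath.tail
          (hadj B'' hB''A B' (mem_union_right _ hB'A) hne2 T hT hTB'' hTB')⟩
    have hbdA' : bdry A' = Ω := by
      ext T
      rw [bdry_mem_iff]
      by_cases hT : T.card = d + 1
      · have hfe : (A'.filter fun F => T ⊆ F ∧ T.card + 1 = F.card) =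
            (A'.filter fun F => T ⊆ F) := by
          apply filter_congr
          intro B hB
          have hBA : B ∈ A := mem_of_mem_filter B hB
          simp [hT, (hAfact B hBA).2]
        rw [hfe]
        have := hsplitc T
        have hAe := hA''even T hT
        rw [hparA T hT]
        constructor
        · intro h
          rw [this]
          exact h.add_even hAe
        · intro h
          rcases Nat.even_or_odd ((A'.filter fun B => T ⊆ B).card) with he | ho
          · exfalso
            rw [← Nat.not_even_iff_odd] at h
            exact h (by rw [this]; exact he.add hAe)
          · exact ho
      · have hfe : (A'.filter fun F => T ⊆ F ∧ T.card + 1 = F.card) = ∅ := by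
          apply filter_false_of_mem
          intro B hB
          have hBA : B ∈ A := mem_of_mem_filter B hB
          rw [(hAfact B hBA).2]
          intro hcontra
          exact hT (by omega)
        rw [hfe]
        simp only [card_empty]
        constructor
        · intro h; exact absurd h (by decide)
        · intro h; exact absurd (hcard T h) hT
    refine hmin A' ?_ hbdA'
    refine Finset.ssubset_iff_of_subset (filter_subset _ _) |>.2 ⟨B₀, hB₀A, ?_⟩
    rw [mem_filter]
    exact fun h => hB₀ h.2
  constructor
  · obtain ⟨F, hF⟩ := hne
    exact ⟨insert v F, hvU F hF⟩
  refine ⟨hcardU, ?_, ?_⟩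
  -- connectivity
  · have toCone : ∀ Z ∈ U, ∃ F ∈ Ω,
        Relation.ReflTransGen (adjOn (d + 1) U) (insert v F) Z := by
      intro Z hZ
      rcases mem_union.1 hZ with hZ | hZ
      · obtain ⟨F, hF, rfl⟩ := mem_image.1 hZ
        exact ⟨F, hF, .refl⟩
      · exact hallP Z hZ
    intro X hX Y hY
    obtain ⟨F, hF, pX⟩ := toCone X hX
    obtain ⟨G, hG, pY⟩ := toCone Y hY
    exact (haveI : Std.Symm (adjOn (d + 1) U) := ⟨fun _ _ h => hsymm h⟩; symm_of (Relation.ReflTransGen (adjOn (d + 1) U)) pX).trans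
      ((cone_conn F hF G hG).trans pY)
  -- parity
  · intro T hT
    have hsplit : (U.filter fun F => T ⊆ F).card =
        ((Ω.image fun F => insert v F).filter fun F => T ⊆ F).card +
          (A.filter fun F => T ⊆ F).card := by
      rw [hUdef, filter_union,
        card_union_of_disjoint (Finset.disjoint_filter_filter hdisj)]
    have hcone : ((Ω.image fun F => insert v F).filter fun F => T ⊆ F).card =
        (Ω.filter fun F => T ⊆ insert v F).card := by
      rw [filter_image]
      exact card_image_of_injOn (hinj.mono (filter_subset _ _))
    rw [hsplit, hcone]
    by_cases hvT : v ∈ T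
    · have hA0 : (A.filter fun F => T ⊆ F) = ∅ := by
        apply filter_false_of_mem
        intro B hB hTB
        exact (hAfact B hB).1 (hTB hvT)
      have hfe : (Ω.filter fun F => T ⊆ insert v F) =
          (Ω.filter fun F => T.erase v ⊆ F) := by
        apply filter_congr
        intro F _
        simp [subset_insert_iff]
      rw [hA0, card_empty, hfe, Nat.add_zero]
      exact heven (T.erase v) (by rw [card_erase_of_mem hvT, hT]; omega)
    · have hfe : (Ω.filter fun F => T ⊆ insert v F) = (Ω.filter fun F => F = T) := by
        apply filter_congr
        intro F hF
        rw [subset_insert_iff_of_notMem hvT]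
        constructor
        · intro h
          exact (Finset.eq_of_subset_of_card_le h
            (by rw [hcard F hF, hT])).symm
        · intro h; exact h.ge
      rw [hfe, filter_eq']
      by_cases hTΩ : T ∈ Ω
      · rw [if_pos hTΩ, card_singleton]
        obtain ⟨m, hm⟩ := (hparA T hT).1 hTΩ
        exact ⟨m + 1, by omega⟩
      · rw [if_neg hTΩ, card_empty, Nat.zero_add, ← Nat.not_odd_iff_even]
        exact fun h => hTΩ ((hparA T hT).2 h)

end

end ConnonFaridi
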